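/- Let K be a nonempty compact convex subset of a Hausdorff locally convex real topological vector space E, and let C = {(λ, λ • x) : λ > 0, x ∈ K} ∪ {0} ⊆ ℝ × E, partially ordered by u ≤ v iff v − u ∈ C. The following are equivalent: (1) C is a lattice, i.e. every pair of elements of C has a least upper bound and a greatest lower bound in C with respect to this order (that is, K is a Choquet simplex); (2) C has the Riesz decomposition property: for all u, v, w ∈ C with w ≤ u + v there exist w₁, w₂ ∈ C with w = w₁ + w₂, w₁ ≤ u, w₂ ≤ v; (3) every convex set-valued map T assigning to each x ∈ K a nonempty compact convex subset of ℝ admits an affine selection. -/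

import Mathlib

open scoped Pointwise



namespace Ch6

variable {E : Type*} [AddCommGroup E] [Module ℝ E]

section Alg

variable {K : Set E} {C : Set (ℝ × E)}

theorem zero_mem (hC : C = {p : ℝ × E | ∃ l : ℝ, 0 < l ∧ ∃ x ∈ K, p = (l, l • x)} ∪ {0}) :
    (0 : ℝ × E) ∈ C := by rw [hC]; exact Or.inr rfl

theorem mk_mem (hC : C = {p : ℝ × E | ∃ l : ℝ, 0 < l ∧ ∃ x ∈ K, p = (l, l • x)} ∪ {0})
    {l : ℝ} {x : E} (hl : 0 < l) (hx : x ∈ K) : (l, l • x) ∈ C := by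
  rw [hC]; exact Or.inl ⟨l, hl, x, hx, rfl⟩

theorem fst_nonneg (hC : C = {p : ℝ × E | ∃ l : ℝ, 0 < l ∧ ∃ x ∈ K, p = (l, l • x)} ∪ {0})
    {c : ℝ × E} (hc : c ∈ C) : 0 ≤ c.1 := by
  rw [hC] at hc
  rcases hc with ⟨l, hl, x, hx, rfl⟩ | h
  · exact le_of_lt hl
  · simp only [Set.mem_singleton_iff] at h; rw [h]; exact le_refl 0

theorem rep' (hC : C = {p : ℝ × E | ∃ l : ℝ, 0 < l ∧ ∃ x ∈ K, p = (l, l • x)} ∪ {0})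
    {c : ℝ × E} (hc : c ∈ C) (hne : c ≠ 0) :
    0 < c.1 ∧ c.1⁻¹ • c.2 ∈ K ∧ c = c.1 • (1, c.1⁻¹ • c.2) := by
  rw [hC] at hc
  rcases hc with ⟨l, hl, x, hx, rfl⟩ | h
  · refine ⟨hl, ?_, ?_⟩
    · simpa [smul_smul, inv_mul_cancel₀ hl.ne'] using hx
    · simp [Prod.ext_iff, smul_smul, mul_inv_cancel₀ hl.ne', inv_mul_cancel₀ hl.ne']
  · exact absurd h hne

theorem eq_zero_of_fst (hC : C = {p : ℝ × E | ∃ l : ℝ, 0 < l ∧ ∃ x ∈ K, p = (l, l • x)} ∪ {0})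
    {c : ℝ × E} (hc : c ∈ C) (h : c.1 = 0) : c = 0 := by
  by_contra hne
  exact absurd h (rep' hC hc hne).1.ne'

theorem pointed (hC : C = {p : ℝ × E | ∃ l : ℝ, 0 < l ∧ ∃ x ∈ K, p = (l, l • x)} ∪ {0})
    {c : ℝ × E} (hc : c ∈ C) (hc' : -c ∈ C) : c = 0 := by
  have h1 := fst_nonneg hC hc
  have h2 := fst_nonneg hC hc'
  simp only [Prod.fst_neg, Left.nonneg_neg_iff] at h2
  exact eq_zero_of_fst hC hc (le_antisymm h2 h1)

theorem smul_mem (hC : C = {p : ℝ × E | ∃ l : ℝ, 0 < l ∧ ∃ x ∈ K, p = (l, l • x)} ∪ {0})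
    {t : ℝ} {c : ℝ × E} (ht : 0 < t) (hc : c ∈ C) : t • c ∈ C := by
  rcases eq_or_ne c 0 with rfl | hne
  · simpa using zero_mem hC
  · obtain ⟨h1, h2, h3⟩ := rep' hC hc hne
    rw [h3, smul_smul]
    have : (t * c.1) • ((1 : ℝ), c.1⁻¹ • c.2) = (t * c.1, (t * c.1) • (c.1⁻¹ • c.2)) := by
      simp [Prod.smul_def]
    rw [this]
    exact mk_mem hC (by positivity) h2

theorem smul_mem' (hC : C = {p : ℝ × E | ∃ l : ℝ, 0 < l ∧ ∃ x ∈ K, p = (l, l • x)} ∪ {0})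
    {t : ℝ} {c : ℝ × E} (ht : 0 ≤ t) (hc : c ∈ C) : t • c ∈ C := by
  rcases eq_or_lt_of_le ht with rfl | ht'
  · simpa using zero_mem hC
  · exact smul_mem hC ht' hc

theorem smul_one_eq {t : ℝ} {z : E} : t • ((1 : ℝ), z) = (t, t • z) := by
  simp [Prod.smul_def]

theorem add_mem (hKconv : Convex ℝ K)
    (hC : C = {p : ℝ × E | ∃ l : ℝ, 0 < l ∧ ∃ x ∈ K, p = (l, l • x)} ∪ {0})
    {c c' : ℝ × E} (hc : c ∈ C) (hc' : c' ∈ C) : c + c' ∈ C := by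
  rcases eq_or_ne c 0 with rfl | hne
  · simpa using hc'
  rcases eq_or_ne c' 0 with rfl | hne'
  · simpa using hc
  obtain ⟨h1, h2, h3⟩ := rep' hC hc hne
  obtain ⟨h1', h2', h3'⟩ := rep' hC hc' hne'
  set l := c.1 with hl
  set m := c'.1 with hm
  set x := l⁻¹ • c.2 with hx
  set y := m⁻¹ • c'.2 with hy
  have hsum : 0 < l + m := by positivity
  set z := (l / (l + m)) • x + (m / (l + m)) • y with hzdef
  have hz : z ∈ K := by
    refine hKconv h2 h2' (by positivity) (by positivity) ?_
    field_simp
  have e1 : (l + m) * (l / (l + m)) = l := by field_simp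
  have e2 : (l + m) * (m / (l + m)) = m := by field_simp
  have heq : c + c' = (l + m, (l + m) • z) := by
    rw [h3, h3', smul_one_eq, smul_one_eq, Prod.mk_add_mk]
    refine Prod.ext_iff.mpr ⟨rfl, ?_⟩
    show l • x + m • y = (l + m) • z
    rw [hzdef]
    simp only [hx, hy, smul_add, smul_smul]
    match_scalars <;> field_simp
  rw [heq]
  exact mk_mem hC hsum hz

end Alg



variable {E : Type*} [AddCommGroup E] [Module ℝ E]
variable {K : Set E} {C : Set (ℝ × E)}

-- local notation for statements
def IsLat (C : Set (ℝ × E)) : Prop :=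
  ∀ u ∈ C, ∀ v ∈ C,
    (∃ s ∈ C, (s - u ∈ C ∧ s - v ∈ C) ∧
      ∀ t ∈ C, t - u ∈ C → t - v ∈ C → t - s ∈ C) ∧
    (∃ i ∈ C, (u - i ∈ C ∧ v - i ∈ C) ∧
      ∀ t ∈ C, u - t ∈ C → v - t ∈ C → i - t ∈ C)

def IsRiesz (C : Set (ℝ × E)) : Prop :=
  ∀ u ∈ C, ∀ v ∈ C, ∀ w ∈ C, u + v - w ∈ C →
    ∃ w₁ ∈ C, ∃ w₂ ∈ C, w = w₁ + w₂ ∧ u - w₁ ∈ C ∧ v - w₂ ∈ C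

theorem one_two (hKconv : Convex ℝ K)
    (hC : C = {p : ℝ × E | ∃ l : ℝ, 0 < l ∧ ∃ x ∈ K, p = (l, l • x)} ∪ {0})
    (h1 : IsLat C) : IsRiesz C := by
  intro u hu v hv w hw hr
  obtain ⟨-, i, hiC, ⟨hwi, hui⟩, hmin⟩ := h1 w hw u hu
  have hwv : w + v ∈ C := Ch6.add_mem hKconv hC hw hv
  have huv : u + v ∈ C := Ch6.add_mem hKconv hC hu hv
  obtain ⟨-, j, hjC, ⟨h1j, h2j⟩, hjmin⟩ := h1 (w + v) hwv (u + v) huv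
  have hivC : i + v ∈ C := Ch6.add_mem hKconv hC hiC hv
  have hji : j - (i + v) ∈ C := by
    have := hjmin (i + v) hivC (by rw [show w + v - (i + v) = w - i by abel]; exact hwi)
      (by rw [show u + v - (i + v) = u - i by abel]; exact hui)
    exact this
  have hjv : j - v ∈ C := hjmin v hv (by simpa using hw) (by simpa using hu)
  have hij : (i + v) - j ∈ C := by
    have := hmin (j - v) hjv
      (by rw [show w - (j - v) = w + v - j by abel]; exact h1j)
      (by rw [show u - (j - v) = u + v - j by abel]; exact h2j)
    rw [show i + v - j = i - (j - v) by abel]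
    exact this
  have hjeq : j = i + v := by
    have h0 := pointed hC hji (by rw [show -(j - (i + v)) = (i + v) - j by abel]; exact hij)
    have : j - (i + v) = 0 := h0
    have := sub_eq_zero.mp this
    exact this
  have hjw : j - w ∈ C := hjmin w hw (by simpa using hv) hr
  refine ⟨i, hiC, w - i, hwi, by abel, hui, ?_⟩
  rw [show v - (w - i) = (i + v) - w by abel, ← hjeq]
  exact hjw

theorem interp (hKconv : Convex ℝ K)
    (hC : C = {p : ℝ × E | ∃ l : ℝ, 0 < l ∧ ∃ x ∈ K, p = (l, l • x)} ∪ {0})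
    (h2 : IsRiesz C) {a₁ a₂ b₁ b₂ : ℝ × E}
    (ha₁ : a₁ ∈ C) (ha₂ : a₂ ∈ C) (hb₁ : b₁ ∈ C) (hb₂ : b₂ ∈ C)
    (h11 : b₁ - a₁ ∈ C) (h12 : b₁ - a₂ ∈ C) (h21 : b₂ - a₁ ∈ C) (h22 : b₂ - a₂ ∈ C) :
    ∃ c ∈ C, c - a₁ ∈ C ∧ c - a₂ ∈ C ∧ b₁ - c ∈ C ∧ b₂ - c ∈ C := by
  obtain ⟨w₁, hw₁, w₂, hw₂, hsum, hu1, hv2⟩ :=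
    h2 (b₁ - a₂) h12 (b₂ - a₁) h21 (b₁ - a₁) h11
    (by rw [show b₁ - a₂ + (b₂ - a₁) - (b₁ - a₁) = b₂ - a₂ by abel]; exact h22)
  refine ⟨a₁ + w₂, Ch6.add_mem hKconv hC ha₁ hw₂, ?_, ?_, ?_, ?_⟩
  · rw [show a₁ + w₂ - a₁ = w₂ by abel]; exact hw₂
  · rw [show a₁ + w₂ - a₂ = (b₁ - a₂) - w₁ + (w₁ + w₂ - (b₁ - a₁)) by abel, ← hsum,
      show b₁ - a₂ - w₁ + (b₁ - a₁ - (b₁ - a₁)) = b₁ - a₂ - w₁ by abel]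
    exact hu1
  · rw [show b₁ - (a₁ + w₂) = (b₁ - a₁) - w₂ by abel, hsum,
      show w₁ + w₂ - w₂ = w₁ by abel]
    exact hw₁
  · rw [show b₂ - (a₁ + w₂) = (b₂ - a₁) - w₂ by abel]
    exact hv2


section Topo

variable {E : Type*} [AddCommGroup E] [Module ℝ E] [TopologicalSpace E]
  [IsTopologicalAddGroup E] [ContinuousSMul ℝ E] [T2Space E]
variable {K : Set E} {C : Set (ℝ × E)}

theorem phi_cont : Continuous (fun q : ℝ × E => (q.1, q.1 • q.2)) :=
  continuous_fst.prodMk (continuous_fst.smul continuous_snd)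

theorem img_cpt (hKcomp : IsCompact K) (Λ : ℝ) :
    IsCompact ((fun q : ℝ × E => (q.1, q.1 • q.2)) '' (Set.Icc 0 Λ ×ˢ K)) :=
  (isCompact_Icc.prod hKcomp).image phi_cont

theorem img_sub (hC : C = {p : ℝ × E | ∃ l : ℝ, 0 < l ∧ ∃ x ∈ K, p = (l, l • x)} ∪ {0})
    {Λ : ℝ} : (fun q : ℝ × E => (q.1, q.1 • q.2)) '' (Set.Icc 0 Λ ×ˢ K) ⊆ C := by
  rintro p ⟨⟨t, x⟩, ⟨⟨ht0, htΛ⟩, hx⟩, rfl⟩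
  rcases eq_or_lt_of_le ht0 with rfl | ht
  · show ((0:ℝ), (0:ℝ) • x) ∈ C
    rw [zero_smul]; exact zero_mem hC
  · exact mk_mem hC ht hx

theorem mem_img (hKne : K.Nonempty)
    (hC : C = {p : ℝ × E | ∃ l : ℝ, 0 < l ∧ ∃ x ∈ K, p = (l, l • x)} ∪ {0})
    {q : ℝ × E} {Λ : ℝ} (hq : q ∈ C) (hΛ : q.1 ≤ Λ) :
    q ∈ (fun q : ℝ × E => (q.1, q.1 • q.2)) '' (Set.Icc 0 Λ ×ˢ K) := by
  rcases eq_or_ne q 0 with rfl | hne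
  · obtain ⟨x₀, hx₀⟩ := hKne
    exact ⟨(0, x₀), ⟨⟨le_refl 0, by simpa using hΛ⟩, hx₀⟩, by simp [Prod.ext_iff]⟩
  · obtain ⟨h1, h2, h3⟩ := rep' hC hq hne
    refine ⟨(q.1, q.1⁻¹ • q.2), ⟨⟨h1.le, hΛ⟩, h2⟩, ?_⟩
    show (q.1, q.1 • (q.1⁻¹ • q.2)) = q
    rw [← smul_one_eq, ← h3]

theorem isClosed_C (hKne : K.Nonempty) (hKcomp : IsCompact K)
    (hC : C = {p : ℝ × E | ∃ l : ℝ, 0 < l ∧ ∃ x ∈ K, p = (l, l • x)} ∪ {0}) :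
    IsClosed C := by
  apply isClosed_of_closure_subset
  intro p hp
  have hfst : 0 ≤ p.1 := by
    have hsub : C ⊆ {q : ℝ × E | 0 ≤ q.1} := fun c hc => fst_nonneg hC hc
    have hcl : IsClosed {q : ℝ × E | 0 ≤ q.1} := isClosed_le continuous_const continuous_fst
    have := closure_mono hsub hp
    rwa [hcl.closure_eq] at this
  set Λ := p.1 + 1 with hΛdef
  have hΛpos : 0 < Λ := by simp only [hΛdef]; linarith
  have hN : {q : ℝ × E | q.1 < Λ} ∈ nhds p :=
    (isOpen_lt continuous_fst continuous_const).mem_nhds (by simp [hΛdef])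
  have hp2 : p ∈ closure (C ∩ {q : ℝ × E | q.1 < Λ}) := by
    rw [mem_closure_iff_nhds] at hp ⊢
    intro U hU
    obtain ⟨q, hqU, hqC⟩ := hp (U ∩ {q : ℝ × E | q.1 < Λ}) (Filter.inter_mem hU hN)
    exact ⟨q, hqU.1, hqC, hqU.2⟩
  have hsub : C ∩ {q : ℝ × E | q.1 < Λ} ⊆
      (fun q : ℝ × E => (q.1, q.1 • q.2)) '' (Set.Icc 0 Λ ×ˢ K) :=
    fun q hq => mem_img hKne hC hq.1 hq.2.le
  have hclosed : IsClosed ((fun q : ℝ × E => (q.1, q.1 • q.2)) '' (Set.Icc 0 Λ ×ˢ K)) :=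
    (img_cpt hKcomp Λ).isClosed
  have := (closure_mono hsub).trans hclosed.closure_eq.subset hp2
  exact img_sub hC this

theorem cpt_interval (hKne : K.Nonempty) (hKcomp : IsCompact K)
    (hC : C = {p : ℝ × E | ∃ l : ℝ, 0 < l ∧ ∃ x ∈ K, p = (l, l • x)} ∪ {0})
    {c : ℝ × E} : IsCompact {p : ℝ × E | p ∈ C ∧ c - p ∈ C} := by
  have hcl : IsClosed {p : ℝ × E | p ∈ C ∧ c - p ∈ C} := by
    have h1 : IsClosed C := isClosed_C hKne hKcomp hC
    exact (h1.preimage continuous_id).inter (h1.preimage (continuous_const.sub continuous_id))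
  refine (img_cpt hKcomp c.1).of_isClosed_subset hcl ?_
  rintro p ⟨hpC, hcp⟩
  refine mem_img hKne hC hpC ?_
  have := fst_nonneg hC hcp
  simp only [Prod.fst_sub] at this
  linarith

theorem two_one (hKne : K.Nonempty) (hKcomp : IsCompact K) (hKconv : Convex ℝ K)
    (hC : C = {p : ℝ × E | ∃ l : ℝ, 0 < l ∧ ∃ x ∈ K, p = (l, l • x)} ∪ {0})
    (h2 : IsRiesz C) : IsLat C := by
  have hadd := fun {c c' : ℝ × E} => Ch6.add_mem hKconv hC (c := c) (c' := c')
  intro u hu v hv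
  constructor
  · -- supremum
    set U : Set (ℝ × E) :=
      {t | t ∈ C ∧ (u + v) - t ∈ C} ∩ {t | t - u ∈ C} ∩ {t | t - v ∈ C} with hU
    have hUmem : ∀ t, t ∈ U ↔ t ∈ C ∧ (u + v) - t ∈ C ∧ t - u ∈ C ∧ t - v ∈ C := by
      intro t
      simp only [hU, Set.mem_inter_iff, Set.mem_setOf_eq]
      tauto
    have hclC : IsClosed C := isClosed_C hKne hKcomp hC
    have hUcpt : IsCompact U := by
      refine IsCompact.inter_right (IsCompact.inter_right ?_ ?_) ?_
      · exact cpt_interval hKne hKcomp hC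
      · exact hclC.preimage (continuous_id.sub continuous_const)
      · exact hclC.preimage (continuous_id.sub continuous_const)
    have huvU : u + v ∈ U := by
      rw [hUmem]
      refine ⟨hadd hu hv, by simpa using zero_mem hC, ?_, ?_⟩
      · rw [show u + v - u = v by abel]; exact hv
      · rw [show u + v - v = u by abel]; exact hu
    have hUne : U.Nonempty := ⟨u + v, huvU⟩
    -- the directed family of lower sections
    haveI : Nonempty U := hUne.to_subtype
    set Z : U → Set (ℝ × E) := fun t => {s | s ∈ U ∧ t.1 - s ∈ C} with hZ
    have hZne : ∀ t, (Z t).Nonempty := fun t => ⟨t.1, t.2, by simpa using zero_mem hC⟩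
    have hZcl : ∀ t : U, IsClosed (Z t) := fun t =>
      (hUcpt.isClosed.preimage continuous_id).inter
        (hclC.preimage (continuous_const.sub continuous_id))
    have hZcpt : ∀ t : U, IsCompact (Z t) := fun t =>
      hUcpt.of_isClosed_subset (hZcl t) (fun s hs => hs.1)
    have hdir : Directed (fun x1 x2 => x1 ⊇ x2) Z := by
      intro t₁ t₂
      have ht₁ := (hUmem t₁.1).mp t₁.2
      have ht₂ := (hUmem t₂.1).mp t₂.2
      obtain ⟨c, hcC, hcu, hcv, h1c, h2c⟩ :=
        interp hKconv hC h2 hu hv ht₁.1 ht₂.1 ht₁.2.2.1 ht₁.2.2.2 ht₂.2.2.1 ht₂.2.2.2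
      have hcU : c ∈ U := by
        rw [hUmem]
        refine ⟨hcC, ?_, hcu, hcv⟩
        rw [show u + v - c = (u + v - t₁.1) + (t₁.1 - c) by abel]
        exact hadd ht₁.2.1 h1c
      refine ⟨⟨c, hcU⟩, ?_, ?_⟩
      · intro s hs
        exact ⟨hs.1, by rw [show t₁.1 - s = (t₁.1 - c) + (c - s) by abel]; exact hadd h1c hs.2⟩
      · intro s hs
        exact ⟨hs.1, by rw [show t₂.1 - s = (t₂.1 - c) + (c - s) by abel]; exact hadd h2c hs.2⟩
    obtain ⟨s, hs⟩ :=
      IsCompact.nonempty_iInter_of_directed_nonempty_isCompact_isClosed Z hdir hZne hZcpt hZcl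
    simp only [Set.mem_iInter] at hs
    have hsU : s ∈ U := (hs ⟨u + v, huvU⟩).1
    have hsle : ∀ t : ℝ × E, t ∈ U → t - s ∈ C := fun t ht => (hs ⟨t, ht⟩).2
    have hsm := (hUmem s).mp hsU
    refine ⟨s, hsm.1, ⟨hsm.2.2.1, hsm.2.2.2⟩, ?_⟩
    intro t htC htu htv
    obtain ⟨c, hcC, hcu, hcv, h1c, h2c⟩ :=
      interp hKconv hC h2 hu hv htC (hadd hu hv) htu htv
        (by rw [show u + v - u = v by abel]; exact hv)
        (by rw [show u + v - v = u by abel]; exact hu)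
    have hcU : c ∈ U := (hUmem c).mpr ⟨hcC, h2c, hcu, hcv⟩
    rw [show t - s = (t - c) + (c - s) by abel]
    exact hadd h1c (hsle c hcU)
  · -- infimum
    set L : Set (ℝ × E) := {p | p ∈ C ∧ u - p ∈ C} ∩ {p | v - p ∈ C} with hL
    have hLmem : ∀ p, p ∈ L ↔ p ∈ C ∧ u - p ∈ C ∧ v - p ∈ C := by
      intro p
      simp only [hL, Set.mem_inter_iff, Set.mem_setOf_eq]
      tauto
    have hclC : IsClosed C := isClosed_C hKne hKcomp hC
    have hLcpt : IsCompact L :=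
      IsCompact.inter_right (cpt_interval hKne hKcomp hC)
        (hclC.preimage (continuous_const.sub continuous_id))
    have h0L : (0 : ℝ × E) ∈ L := by
      rw [hLmem]
      exact ⟨zero_mem hC, by simpa using hu, by simpa using hv⟩
    haveI : Nonempty L := ⟨⟨0, h0L⟩⟩
    set Z : L → Set (ℝ × E) := fun p => {q | q ∈ L ∧ q - p.1 ∈ C} with hZ
    have hZne : ∀ p, (Z p).Nonempty := fun p => ⟨p.1, p.2, by simpa using zero_mem hC⟩
    have hZcl : ∀ p : L, IsClosed (Z p) := fun p =>
      (hLcpt.isClosed.preimage continuous_id).inter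
        (hclC.preimage (continuous_id.sub continuous_const))
    have hZcpt : ∀ p : L, IsCompact (Z p) := fun p =>
      hLcpt.of_isClosed_subset (hZcl p) (fun s hs => hs.1)
    have hdir : Directed (fun x1 x2 => x1 ⊇ x2) Z := by
      intro p₁ p₂
      have hp₁ := (hLmem p₁.1).mp p₁.2
      have hp₂ := (hLmem p₂.1).mp p₂.2
      obtain ⟨c, hcC, hc1, hc2, huc, hvc⟩ :=
        interp hKconv hC h2 hp₁.1 hp₂.1 hu hv hp₁.2.1 hp₂.2.1 hp₁.2.2 hp₂.2.2
      have hcL : c ∈ L := (hLmem c).mpr ⟨hcC, huc, hvc⟩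
      refine ⟨⟨c, hcL⟩, ?_, ?_⟩
      · intro q hq
        exact ⟨hq.1, by rw [show q - p₁.1 = (q - c) + (c - p₁.1) by abel]; exact hadd hq.2 hc1⟩
      · intro q hq
        exact ⟨hq.1, by rw [show q - p₂.1 = (q - c) + (c - p₂.1) by abel]; exact hadd hq.2 hc2⟩
    obtain ⟨i, hi⟩ :=
      IsCompact.nonempty_iInter_of_directed_nonempty_isCompact_isClosed Z hdir hZne hZcpt hZcl
    simp only [Set.mem_iInter] at hi
    have hiL : i ∈ L := (hi ⟨0, h0L⟩).1
    have him := (hLmem i).mp hiL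
    refine ⟨i, him.1, ⟨him.2.1, him.2.2⟩, ?_⟩
    intro t htC htu htv
    exact (hi ⟨t, (hLmem t).mpr ⟨htC, htu, htv⟩⟩).2

end Topo
end Ch6
open scoped Pointwise
namespace Ch6X

variable {E : Type*} [AddCommGroup E] [Module ℝ E]
variable {K : Set E} {C : Set (ℝ × E)}

noncomputable def hom (f : E → ℝ) : ℝ × E → ℝ := fun c => c.1 * f (c.1⁻¹ • c.2)

theorem hom_zero {f : E → ℝ} : hom f 0 = 0 := by simp [hom]

theorem hom_smul {f : E → ℝ} {t : ℝ} (ht : t ≠ 0) (p : ℝ × E) :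
    hom f (t • p) = t * hom f p := by
  rcases eq_or_ne p.1 0 with h0 | h0
  · simp [hom, h0, Prod.smul_def]
  · have : ((t * p.1)⁻¹) • (t • p.2) = p.1⁻¹ • p.2 := by
      rw [smul_smul]
      congr 1
      field_simp
    simp only [hom, Prod.smul_def, smul_eq_mul, this]
    ring

theorem sum_mem_C (hKconv : Convex ℝ K)
    (hC : C = {p : ℝ × E | ∃ l : ℝ, 0 < l ∧ ∃ x ∈ K, p = (l, l • x)} ∪ {0})
    {l : List (ℝ × E)} (h : ∀ p ∈ l, p ∈ C) : l.sum ∈ C := by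
  induction l with
  | nil => simpa using Ch6.zero_mem hC
  | cons p l ih =>
    rw [List.sum_cons]
    exact Ch6.add_mem hKconv hC (h p List.mem_cons_self)
      (ih fun q hq => h q (List.mem_cons_of_mem _ hq))

theorem hom_subadd (hKconv : Convex ℝ K)
    (hC : C = {p : ℝ × E | ∃ l : ℝ, 0 < l ∧ ∃ x ∈ K, p = (l, l • x)} ∪ {0})
    {f : E → ℝ}
    (hf : ∀ x ∈ K, ∀ y ∈ K, ∀ θ : ℝ, 0 < θ → θ < 1 →
      f ((1 - θ) • x + θ • y) ≤ (1 - θ) * f x + θ * f y)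
    {c c' : ℝ × E} (hc : c ∈ C) (hc' : c' ∈ C) :
    hom f (c + c') ≤ hom f c + hom f c' := by
  rcases eq_or_ne c 0 with rfl | hne
  · simp [hom]
  rcases eq_or_ne c' 0 with rfl | hne'
  · simp [hom]
  obtain ⟨h1, h2, h3⟩ := Ch6.rep' hC hc hne
  obtain ⟨h1', h2', h3'⟩ := Ch6.rep' hC hc' hne'
  set l := c.1 with hldef
  set l' := c'.1 with hl'def
  set x := c.1⁻¹ • c.2 with hxdef
  set y := c'.1⁻¹ • c'.2 with hydef
  have hsum : 0 < l + l' := by positivity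
  set θ := l' / (l + l') with hθdef
  have hθ : 0 < θ := by positivity
  have hθ' : θ < 1 := by rw [hθdef, div_lt_one hsum]; linarith
  have h1mθ : 1 - θ = l / (l + l') := by rw [hθdef]; field_simp; ring
  have hc2 : c.2 = l • x := by
    conv_lhs => rw [h3]
    rfl
  have hc2' : c'.2 = l' • y := by
    conv_lhs => rw [h3']
    rfl
  have harg : (l + l')⁻¹ • (c + c').2 = (1 - θ) • x + θ • y := by
    show (l + l')⁻¹ • (c.2 + c'.2) = _
    rw [hc2, hc2', h1mθ, hθdef]
    match_scalars <;> field_simp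
  have hK' := hf x h2 y h2' θ hθ hθ'
  show (l + l') * f ((l + l')⁻¹ • (c + c').2) ≤ l * f x + l' * f y
  rw [harg]
  calc (l + l') * f ((1 - θ) • x + θ • y)
      ≤ (l + l') * ((1 - θ) * f x + θ * f y) :=
        mul_le_mul_of_nonneg_left hK' hsum.le
    _ = l * f x + l' * f y := by rw [h1mθ, hθdef]; field_simp; try ring

theorem map_hom_le (hKconv : Convex ℝ K)
    (hC : C = {p : ℝ × E | ∃ l : ℝ, 0 < l ∧ ∃ x ∈ K, p = (l, l • x)} ∪ {0})
    {m M : E → ℝ} (hmM : ∀ x ∈ K, m x ≤ M x)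
    (hMsuper : ∀ {c c' : ℝ × E}, c ∈ C → c' ∈ C → hom M c + hom M c' ≤ hom M (c + c'))
    {l : List (ℝ × E)} (hl : ∀ p ∈ l, p ∈ C) :
    (l.map (hom m)).sum ≤ hom M l.sum := by
  induction l with
  | nil => simp [hom]
  | cons p l ih =>
    have hp : p ∈ C := hl p List.mem_cons_self
    have hl' : ∀ q ∈ l, q ∈ C := fun q hq => hl q (List.mem_cons_of_mem _ hq)
    have hsl : l.sum ∈ C := sum_mem_C hKconv hC hl'
    have hpm : hom m p ≤ hom M p := by
      rcases eq_or_ne p 0 with rfl | hne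
      · simp [hom]
      · obtain ⟨h1, h2, -⟩ := Ch6.rep' hC hp hne
        exact mul_le_mul_of_nonneg_left (hmM _ h2) h1.le
    calc ((p :: l).map (hom m)).sum = hom m p + (l.map (hom m)).sum := by simp
      _ ≤ hom M p + hom M l.sum := add_le_add hpm (ih hl')
      _ ≤ hom M (p + l.sum) := hMsuper hp hsl
      _ = hom M ((p :: l).sum) := by rw [List.sum_cons]

theorem refine_list (hKconv : Convex ℝ K)
    (hC : C = {p : ℝ × E | ∃ l : ℝ, 0 < l ∧ ∃ x ∈ K, p = (l, l • x)} ∪ {0})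
    (h2 : Ch6.IsRiesz C) {m : E → ℝ}
    (hsub : ∀ {c c' : ℝ × E}, c ∈ C → c' ∈ C → hom m (c + c') ≤ hom m c + hom m c') :
    ∀ l : List (ℝ × E), (∀ p ∈ l, p ∈ C) → ∀ w₁, w₁ ∈ C → ∀ w₂, w₂ ∈ C →
      w₁ + w₂ = l.sum →
      ∃ l₁ l₂ : List (ℝ × E), (∀ p ∈ l₁, p ∈ C) ∧ (∀ p ∈ l₂, p ∈ C) ∧
        l₁.sum = w₁ ∧ l₂.sum = w₂ ∧
        (l.map (hom m)).sum ≤ (l₁.map (hom m)).sum + (l₂.map (hom m)).sum := by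
  intro l
  induction l with
  | nil =>
    intro _ w₁ hw₁ w₂ hw₂ hsum
    simp only [List.sum_nil] at hsum
    have hf : w₁.1 + w₂.1 = 0 := by rw [← Prod.fst_add, hsum]; rfl
    have hn₁ := Ch6.fst_nonneg hC hw₁
    have hn₂ := Ch6.fst_nonneg hC hw₂
    have h01 : w₁ = 0 := Ch6.eq_zero_of_fst hC hw₁ (by linarith)
    have h02 : w₂ = 0 := by rw [h01, zero_add] at hsum; exact hsum
    exact ⟨[], [], by simp, by simp, by simp [h01], by simp [h02], by simp⟩
  | cons v l ih =>
    intro hl w₁ hw₁ w₂ hw₂ hsum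
    have hv : v ∈ C := hl v List.mem_cons_self
    have hl' : ∀ q ∈ l, q ∈ C := fun q hq => hl q (List.mem_cons_of_mem _ hq)
    have hls : l.sum ∈ C := sum_mem_C hKconv hC hl'
    have hr : w₁ + w₂ - v ∈ C := by
      rw [hsum, List.sum_cons, show v + l.sum - v = l.sum by abel]; exact hls
    obtain ⟨a, ha, b, hb, hvab, h1a, h2b⟩ := h2 w₁ hw₁ w₂ hw₂ v hv hr
    have hsum' : (w₁ - a) + (w₂ - b) = l.sum := by
      rw [show w₁ - a + (w₂ - b) = w₁ + w₂ - (a + b) by abel, hsum, List.sum_cons, ← hvab]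
      abel
    obtain ⟨l₁, l₂, hm₁, hm₂, hs₁, hs₂, hle⟩ := ih hl' (w₁ - a) h1a (w₂ - b) h2b hsum'
    refine ⟨a :: l₁, b :: l₂, ?_, ?_, ?_, ?_, ?_⟩
    · intro p hp; rcases List.mem_cons.mp hp with rfl | hp; exacts [ha, hm₁ p hp]
    · intro p hp; rcases List.mem_cons.mp hp with rfl | hp; exacts [hb, hm₂ p hp]
    · rw [List.sum_cons, hs₁]; abel
    · rw [List.sum_cons, hs₂]; abel
    · simp only [List.map_cons, List.sum_cons]
      have hv' := hsub ha hb
      rw [← hvab] at hv'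
      linarith

end Ch6X
open scoped Pointwise
namespace Ch6X

variable {E : Type*} [AddCommGroup E] [Module ℝ E]
variable {K : Set E} {C : Set (ℝ × E)}

theorem two_three (hKconv : Convex ℝ K)
    (hC : C = {p : ℝ × E | ∃ l : ℝ, 0 < l ∧ ∃ x ∈ K, p = (l, l • x)} ∪ {0})
    (h2 : Ch6.IsRiesz C) :
    ∀ T : E → Set ℝ,
      (∀ x ∈ K, (T x).Nonempty ∧ IsCompact (T x) ∧ Convex ℝ (T x)) →
      (∀ x ∈ K, ∀ y ∈ K, ∀ θ : ℝ, 0 < θ → θ < 1 →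
        (1 - θ) • T x + θ • T y ⊆ T ((1 - θ) • x + θ • y)) →
      ∃ a : E → ℝ, (∀ x ∈ K, a x ∈ T x) ∧
        (∀ x ∈ K, ∀ y ∈ K, ∀ θ : ℝ, 0 < θ → θ < 1 →
          a ((1 - θ) • x + θ • y) = (1 - θ) • a x + θ • a y) := by
  intro T hTval hTconv
  set m : E → ℝ := fun x => sInf (T x) with hmdef
  set M : E → ℝ := fun x => sSup (T x) with hMdef
  have bddA : ∀ x ∈ K, BddAbove (T x) := fun x hx => (hTval x hx).2.1.bddAbove
  have bddB : ∀ x ∈ K, BddBelow (T x) := fun x hx => (hTval x hx).2.1.bddBelow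
  have hmem_m : ∀ x ∈ K, m x ∈ T x := fun x hx =>
    (hTval x hx).2.1.sInf_mem (hTval x hx).1
  have hmem_M : ∀ x ∈ K, M x ∈ T x := fun x hx =>
    (hTval x hx).2.1.sSup_mem (hTval x hx).1
  have hmM : ∀ x ∈ K, m x ≤ M x := fun x hx =>
    csInf_le_csSup (hTval x hx).1 (bddB x hx) (bddA x hx)
  have hzmem : ∀ x ∈ K, ∀ y ∈ K, ∀ θ : ℝ, 0 < θ → θ < 1 → (1 - θ) • x + θ • y ∈ K :=
    fun x hx y hy θ hθ hθ' => hKconv hx hy (by linarith) hθ.le (by ring)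
  have hcomb : ∀ x ∈ K, ∀ y ∈ K, ∀ θ : ℝ, 0 < θ → θ < 1 → ∀ r ∈ T x, ∀ s ∈ T y,
      (1 - θ) * r + θ * s ∈ T ((1 - θ) • x + θ • y) := by
    intro x hx y hy θ hθ hθ' r hr s hs
    apply hTconv x hx y hy θ hθ hθ'
    exact Set.add_mem_add (Set.smul_mem_smul_set hr) (Set.smul_mem_smul_set hs)
  have hmcvx : ∀ x ∈ K, ∀ y ∈ K, ∀ θ : ℝ, 0 < θ → θ < 1 →
      m ((1 - θ) • x + θ • y) ≤ (1 - θ) * m x + θ * m y := by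
    intro x hx y hy θ hθ hθ'
    exact csInf_le (bddB _ (hzmem x hx y hy θ hθ hθ'))
      (hcomb x hx y hy θ hθ hθ' _ (hmem_m x hx) _ (hmem_m y hy))
  have hMccv : ∀ x ∈ K, ∀ y ∈ K, ∀ θ : ℝ, 0 < θ → θ < 1 →
      (1 - θ) * M x + θ * M y ≤ M ((1 - θ) • x + θ • y) := by
    intro x hx y hy θ hθ hθ'
    exact le_csSup (bddA _ (hzmem x hx y hy θ hθ hθ'))
      (hcomb x hx y hy θ hθ hθ' _ (hmem_M x hx) _ (hmem_M y hy))
  have hTIcc : ∀ x ∈ K, T x = Set.Icc (m x) (M x) := by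
    intro x hx
    apply Set.Subset.antisymm
    · exact fun c hc => ⟨csInf_le (bddB x hx) hc, le_csSup (bddA x hx) hc⟩
    · exact ((hTval x hx).2.2.ordConnected).out (hmem_m x hx) (hmem_M x hx)
  -- homogenized sub/superadditivity
  have hsub : ∀ {c c' : ℝ × E}, c ∈ C → c' ∈ C → hom m (c + c') ≤ hom m c + hom m c' :=
    fun hc hc' => hom_subadd hKconv hC hmcvx hc hc'
  have hsuper : ∀ {c c' : ℝ × E}, c ∈ C → c' ∈ C → hom M c + hom M c' ≤ hom M (c + c') := by
    intro c c' hc hc'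
    have hneg : ∀ x ∈ K, ∀ y ∈ K, ∀ θ : ℝ, 0 < θ → θ < 1 →
        (fun z => -(M z)) ((1 - θ) • x + θ • y) ≤
          (1 - θ) * (fun z => -(M z)) x + θ * (fun z => -(M z)) y := by
      intro x hx y hy θ hθ hθ'
      have := hMccv x hx y hy θ hθ hθ'
      simp only
      linarith
    have h := hom_subadd hKconv hC (f := fun z => -(M z)) hneg hc hc'
    have he : ∀ p : ℝ × E, hom (fun z => -(M z)) p = -(hom M p) := by
      intro p; simp [hom]
    rw [he, he, he] at h
    linarith
  -- the additive envelope
  set S : (ℝ × E) → Set ℝ := fun c =>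
    {r : ℝ | ∃ l : List (ℝ × E), (∀ p ∈ l, p ∈ C) ∧ l.sum = c ∧ (l.map (hom m)).sum = r}
    with hSdef
  have hmemS : ∀ c ∈ C, hom m c ∈ S c := by
    intro c hc
    exact ⟨[c], by simpa using hc, by simp, by simp⟩
  have hSne : ∀ c ∈ C, (S c).Nonempty := fun c hc => ⟨hom m c, hmemS c hc⟩
  have hub : ∀ c ∈ C, ∀ r ∈ S c, r ≤ hom M c := by
    rintro c hc r ⟨l, hl, hlsum, rfl⟩
    have := map_hom_le hKconv hC hmM (fun hx hy => hsuper hx hy) hl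
    rwa [hlsum] at this
  have hSbdd : ∀ c ∈ C, BddAbove (S c) := fun c hc => ⟨hom M c, fun r hr => hub c hc r hr⟩
  set Phi : (ℝ × E) → ℝ := fun c => sSup (S c) with hPhidef
  have hPhi_ge : ∀ c ∈ C, hom m c ≤ Phi c := fun c hc =>
    le_csSup (hSbdd c hc) (hmemS c hc)
  have hPhi_le : ∀ c ∈ C, Phi c ≤ hom M c := fun c hc => csSup_le (hSne c hc) (hub c hc)
  have hPhi_add : ∀ c ∈ C, ∀ c' ∈ C, Phi (c + c') = Phi c + Phi c' := by
    intro c hc c' hc'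
    have hccC : c + c' ∈ C := Ch6.add_mem hKconv hC hc hc'
    apply le_antisymm
    · apply csSup_le (hSne _ hccC)
      rintro r ⟨l, hl, hlsum, rfl⟩
      obtain ⟨l₁, l₂, hm₁, hm₂, hs₁, hs₂, hle⟩ :=
        refine_list hKconv hC h2 (fun hx hy => hsub hx hy) l hl c hc c' hc' hlsum.symm
      have e₁ : (l₁.map (hom m)).sum ≤ Phi c := le_csSup (hSbdd c hc) ⟨l₁, hm₁, hs₁, rfl⟩
      have e₂ : (l₂.map (hom m)).sum ≤ Phi c' := le_csSup (hSbdd c' hc') ⟨l₂, hm₂, hs₂, rfl⟩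
      linarith
    · have step : ∀ r ∈ S c, ∀ r' ∈ S c', r + r' ≤ Phi (c + c') := by
        rintro r ⟨l, hl, hlsum, rfl⟩ r' ⟨l', hl', hlsum', rfl⟩
        apply le_csSup (hSbdd _ hccC)
        refine ⟨l ++ l', ?_, ?_, ?_⟩
        · intro p hp
          rcases List.mem_append.mp hp with h | h
          exacts [hl p h, hl' p h]
        · rw [List.sum_append, hlsum, hlsum']
        · rw [List.map_append, List.sum_append]
      have h1 : ∀ r ∈ S c, r ≤ Phi (c + c') - Phi c' := by
        intro r hr
        have h2' : ∀ r' ∈ S c', r' ≤ Phi (c + c') - r :=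
          fun r' hr' => by linarith [step r hr r' hr']
        have := csSup_le (hSne c' hc') h2'
        linarith
      have := csSup_le (hSne c hc) h1
      linarith
  have hPhi_smul_le : ∀ t : ℝ, 0 < t → ∀ c ∈ C, Phi (t • c) ≤ t * Phi c := by
    intro t ht c hc
    apply csSup_le (hSne _ (Ch6.smul_mem hC ht hc))
    rintro r ⟨l, hl, hlsum, rfl⟩
    have hmem : ∀ p ∈ l.map (t⁻¹ • ·), p ∈ C := by
      intro p hp
      obtain ⟨q, hq, rfl⟩ := List.mem_map.mp hp
      exact Ch6.smul_mem hC (by positivity) (hl q hq)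
    have hsum' : (l.map (t⁻¹ • ·)).sum = c := by
      rw [← List.smul_sum, hlsum, smul_smul, inv_mul_cancel₀ ht.ne', one_smul]
    have hval : ((l.map (t⁻¹ • ·)).map (hom m)).sum = t⁻¹ * (l.map (hom m)).sum := by
      rw [List.map_map]
      have hcongr : l.map (hom m ∘ (t⁻¹ • ·)) = l.map (fun p => t⁻¹ * hom m p) := by
        apply List.map_congr_left
        intro p _
        exact hom_smul (by positivity) p
      rw [hcongr, ← List.sum_map_mul_left]
    have hPc : t⁻¹ * (l.map (hom m)).sum ≤ Phi c :=
      le_csSup (hSbdd c hc) ⟨l.map (t⁻¹ • ·), hmem, hsum', hval⟩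
    calc (l.map (hom m)).sum = t * (t⁻¹ * (l.map (hom m)).sum) := by field_simp
      _ ≤ t * Phi c := mul_le_mul_of_nonneg_left hPc ht.le
  have hPhi_smul : ∀ t : ℝ, 0 < t → ∀ c ∈ C, Phi (t • c) = t * Phi c := by
    intro t ht c hc
    refine le_antisymm (hPhi_smul_le t ht c hc) ?_
    have h := hPhi_smul_le t⁻¹ (by positivity) (t • c) (Ch6.smul_mem hC ht hc)
    rw [smul_smul, inv_mul_cancel₀ ht.ne', one_smul] at h
    have := mul_le_mul_of_nonneg_left h ht.le
    calc t * Phi c ≤ t * (t⁻¹ * Phi (t • c)) := this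
      _ = Phi (t • c) := by field_simp
  -- the affine selection
  refine ⟨fun z => Phi (1, z), ?_, ?_⟩
  · intro x hx
    have h1x : ((1 : ℝ), x) ∈ C := by
      have := Ch6.mk_mem hC one_pos hx
      rwa [one_smul] at this
    rw [hTIcc x hx]
    constructor
    · have := hPhi_ge _ h1x
      have he : hom m ((1 : ℝ), x) = m x := by simp [hom]
      rwa [he] at this
    · have := hPhi_le _ h1x
      have he : hom M ((1 : ℝ), x) = M x := by simp [hom]
      rwa [he] at this
  · intro x hx y hy θ hθ hθ'
    have h1x : ((1 : ℝ), x) ∈ C := by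
      have := Ch6.mk_mem hC one_pos hx; rwa [one_smul] at this
    have h1y : ((1 : ℝ), y) ∈ C := by
      have := Ch6.mk_mem hC one_pos hy; rwa [one_smul] at this
    have key : ((1 : ℝ), (1 - θ) • x + θ • y) =
        (1 - θ) • ((1 : ℝ), x) + θ • ((1 : ℝ), y) := by
      refine Prod.ext_iff.mpr ⟨?_, ?_⟩
      · show (1 : ℝ) = (1 - θ) * 1 + θ * 1
        ring
      · show (1 - θ) • x + θ • y = (1 - θ) • x + θ • y
        rfl
    show Phi (1, (1 - θ) • x + θ • y) = (1 - θ) • Phi (1, x) + θ • Phi (1, y)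
    rw [key, hPhi_add _ (Ch6.smul_mem hC (by linarith) h1x) _ (Ch6.smul_mem hC hθ h1y),
      hPhi_smul _ (by linarith) _ h1x, hPhi_smul _ hθ _ h1y, smul_eq_mul, smul_eq_mul]

end Ch6X
open scoped Pointwise
namespace Ch6Y

variable {E : Type*} [AddCommGroup E] [Module ℝ E]
variable {K : Set E} {C : Set (ℝ × E)}

theorem convex_C (hKconv : Convex ℝ K)
    (hC : C = {p : ℝ × E | ∃ l : ℝ, 0 < l ∧ ∃ x ∈ K, p = (l, l • x)} ∪ {0}) :
    Convex ℝ C := fun c hc c' hc' a b ha hb _ =>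
  Ch6.add_mem hKconv hC (Ch6.smul_mem' hC ha hc) (Ch6.smul_mem' hC hb hc')

theorem convex_interval (hKconv : Convex ℝ K)
    (hC : C = {p : ℝ × E | ∃ l : ℝ, 0 < l ∧ ∃ x ∈ K, p = (l, l • x)} ∪ {0})
    (u : ℝ × E) : Convex ℝ {p : ℝ × E | p ∈ C ∧ u - p ∈ C} := by
  intro p hp q hq a b ha hb hab
  refine ⟨convex_C hKconv hC hp.1 hq.1 ha hb hab, ?_⟩
  have h : a • (u - p) + b • (u - q) = u - (a • p + b • q) := by
    rw [smul_sub, smul_sub]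
    have : a • u + b • u = u := by rw [← add_smul, hab, one_smul]
    rw [show a • u - a • p + (b • u - b • q) = (a • u + b • u) - (a • p + b • q) by abel, this]
  rw [← h]
  exact convex_C hKconv hC hp.2 hq.2 ha hb hab

section Topo
variable [TopologicalSpace E] [IsTopologicalAddGroup E] [ContinuousSMul ℝ E] [T2Space E]
  [LocallyConvexSpace ℝ E]

theorem three_two (hKne : K.Nonempty) (hKcomp : IsCompact K) (hKconv : Convex ℝ K)
    (hC : C = {p : ℝ × E | ∃ l : ℝ, 0 < l ∧ ∃ x ∈ K, p = (l, l • x)} ∪ {0})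
    (h3 : ∀ T : E → Set ℝ,
      (∀ x ∈ K, (T x).Nonempty ∧ IsCompact (T x) ∧ Convex ℝ (T x)) →
      (∀ x ∈ K, ∀ y ∈ K, ∀ θ : ℝ, 0 < θ → θ < 1 →
        (1 - θ) • T x + θ • T y ⊆ T ((1 - θ) • x + θ • y)) →
      ∃ a : E → ℝ, (∀ x ∈ K, a x ∈ T x) ∧
        (∀ x ∈ K, ∀ y ∈ K, ∀ θ : ℝ, 0 < θ → θ < 1 →
          a ((1 - θ) • x + θ • y) = (1 - θ) • a x + θ • a y)) :
    Ch6.IsRiesz C := by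
  classical
  intro u hu v hv w hw hr
  -- degenerate cases
  rcases eq_or_ne u 0 with rfl | hune
  · exact ⟨0, Ch6.zero_mem hC, w, hw, by abel, by simpa using Ch6.zero_mem hC,
      by rw [zero_add] at hr; exact hr⟩
  rcases eq_or_ne v 0 with rfl | hvne
  · exact ⟨w, hw, 0, Ch6.zero_mem hC, by abel, by rw [add_zero] at hr; exact hr,
      by simpa using Ch6.zero_mem hC⟩
  rcases eq_or_ne w 0 with rfl | hwne
  · exact ⟨0, Ch6.zero_mem hC, 0, Ch6.zero_mem hC, by abel, by simpa using hu,
      by simpa using hv⟩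
  by_contra hcon
  push_neg at hcon
  -- separating functional
  set A : Set (ℝ × E) := {p : ℝ × E | p ∈ C ∧ u - p ∈ C} with hA
  set B : Set (ℝ × E) := {p : ℝ × E | p ∈ C ∧ v - p ∈ C} with hB
  have hAcpt : IsCompact A := Ch6.cpt_interval hKne hKcomp hC
  have hBcpt : IsCompact B := Ch6.cpt_interval hKne hKcomp hC
  have hDcpt : IsCompact (A + B) := hAcpt.add hBcpt
  have hDconv : Convex ℝ (A + B) :=
    (convex_interval hKconv hC u).add (convex_interval hKconv hC v)
  have hwD : w ∉ A + B := by
    rintro ⟨p, hp, q, hq, hpq⟩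
    exact hcon p hp.1 q hq.1 hpq.symm hp.2 hq.2
  obtain ⟨f, s, hfs, hsw⟩ :=
    geometric_hahn_banach_closed_point hDconv hDcpt.isClosed hwD
  -- the sandwich data
  set Av : E → Set (ℝ × E) := fun z => {p : ℝ × E | p ∈ C ∧ ((1 : ℝ), z) - p ∈ C}
    with hAvdef
  have hAvcpt : ∀ z, IsCompact (Av z) := fun z => Ch6.cpt_interval hKne hKcomp hC
  have h1mem : ∀ z ∈ K, ((1 : ℝ), z) ∈ C := by
    intro z hz
    have := Ch6.mk_mem hC one_pos hz; rwa [one_smul] at this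
  have h0Av : ∀ z ∈ K, (0 : ℝ × E) ∈ Av z := by
    intro z hz
    exact ⟨Ch6.zero_mem hC, by simpa using h1mem z hz⟩
  have hAvne : ∀ z ∈ K, (Av z).Nonempty := fun z hz => ⟨0, h0Av z hz⟩
  have hbdd : ∀ z, BddAbove (f '' Av z) := fun z =>
    ((hAvcpt z).image f.continuous).bddAbove
  set M' : E → ℝ := fun z => sSup (f '' Av z) with hM'def
  set m' : E → ℝ := fun z => max 0 (f ((1 : ℝ), z)) with hm'def
  have hle_M : ∀ z ∈ K, ∀ q ∈ Av z, f q ≤ M' z := fun z hz q hq =>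
    le_csSup (hbdd z) (Set.mem_image_of_mem f hq)
  have hmax : ∀ z ∈ K, ∃ p ∈ Av z, M' z = f p ∧ ∀ q ∈ Av z, f q ≤ f p := by
    intro z hz
    obtain ⟨p, hp, hpm⟩ := (hAvcpt z).exists_isMaxOn (hAvne z hz) f.continuous.continuousOn
    refine ⟨p, hp, ?_, fun q hq => hpm hq⟩
    apply le_antisymm
    · apply csSup_le ((hAvne z hz).image f)
      rintro r ⟨q, hq, rfl⟩
      exact hpm hq
    · exact le_csSup (hbdd z) (Set.mem_image_of_mem f hp)
  have hM0 : ∀ z ∈ K, 0 ≤ M' z := by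
    intro z hz
    have := hle_M z hz 0 (h0Av z hz)
    simpa using this
  have hfM : ∀ z ∈ K, f (1, z) ≤ M' z := fun z hz =>
    hle_M z hz (1, z) ⟨h1mem z hz, by simpa using Ch6.zero_mem hC⟩
  have hm'M : ∀ z ∈ K, m' z ≤ M' z := fun z hz => max_le (hM0 z hz) (hfM z hz)
  set T : E → Set ℝ := fun z => if z ∈ K then Set.Icc (m' z) (M' z) else {0} with hTdef
  have hTeq : ∀ z ∈ K, T z = Set.Icc (m' z) (M' z) := by
    intro z hz
    simp only [hTdef, if_pos hz]
  have hTval : ∀ z ∈ K, (T z).Nonempty ∧ IsCompact (T z) ∧ Convex ℝ (T z) := by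
    intro z hz
    rw [hTeq z hz]
    exact ⟨Set.nonempty_Icc.mpr (hm'M z hz), isCompact_Icc, convex_Icc _ _⟩
  have hzmem : ∀ x ∈ K, ∀ y ∈ K, ∀ θ : ℝ, 0 < θ → θ < 1 → (1 - θ) • x + θ • y ∈ K :=
    fun x hx y hy θ hθ hθ' => hKconv hx hy (by linarith) hθ.le (by ring)
  have hkey : ∀ (x y : E) (θ : ℝ), ((1 : ℝ), (1 - θ) • x + θ • y) =
      (1 - θ) • ((1 : ℝ), x) + θ • ((1 : ℝ), y) := by
    intro x y θ
    refine Prod.ext_iff.mpr ⟨?_, rfl⟩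
    show (1 : ℝ) = (1 - θ) * 1 + θ * 1
    ring
  have hTconv : ∀ x ∈ K, ∀ y ∈ K, ∀ θ : ℝ, 0 < θ → θ < 1 →
      (1 - θ) • T x + θ • T y ⊆ T ((1 - θ) • x + θ • y) := by
    intro x hx y hy θ hθ hθ'
    have hz : (1 - θ) • x + θ • y ∈ K := hzmem x hx y hy θ hθ hθ'
    intro t ht
    obtain ⟨t₁, ht₁, t₂, ht₂, rfl⟩ := Set.mem_add.mp ht
    obtain ⟨r, hr, rfl⟩ := ht₁
    obtain ⟨r', hr', rfl⟩ := ht₂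
    rw [hTeq x hx] at hr
    rw [hTeq y hy] at hr'
    rw [hTeq _ hz]
    have hflin : f (1, (1 - θ) • x + θ • y) = (1 - θ) * f (1, x) + θ * f (1, y) := by
      rw [hkey, map_add, map_smul, map_smul, smul_eq_mul, smul_eq_mul]
    simp only [smul_eq_mul]
    constructor
    · -- lower bound
      apply max_le
      · have h0r : 0 ≤ r := le_trans (le_max_left _ _) hr.1
        have h0r' : 0 ≤ r' := le_trans (le_max_left _ _) hr'.1
        nlinarith [mul_nonneg (by linarith : (0:ℝ) ≤ 1 - θ) h0r, mul_nonneg hθ.le h0r']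
      · rw [hflin]
        have h1 : f (1, x) ≤ r := le_trans (le_max_right _ _) hr.1
        have h2 : f (1, y) ≤ r' := le_trans (le_max_right _ _) hr'.1
        nlinarith
    · -- upper bound
      obtain ⟨p₁, hp₁, hMp₁, -⟩ := hmax x hx
      obtain ⟨p₂, hp₂, hMp₂, -⟩ := hmax y hy
      have hq : (1 - θ) • p₁ + θ • p₂ ∈ Av ((1 - θ) • x + θ • y) := by
        constructor
        · exact Ch6.add_mem hKconv hC (Ch6.smul_mem hC (by linarith) hp₁.1)
            (Ch6.smul_mem hC hθ hp₂.1)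
        · have heq : ((1 : ℝ), (1 - θ) • x + θ • y) - ((1 - θ) • p₁ + θ • p₂) =
              (1 - θ) • (((1 : ℝ), x) - p₁) + θ • (((1 : ℝ), y) - p₂) := by
            rw [smul_sub, smul_sub, hkey x y θ]
            abel
          rw [heq]
          exact Ch6.add_mem hKconv hC (Ch6.smul_mem hC (by linarith) hp₁.2)
            (Ch6.smul_mem hC hθ hp₂.2)
      have := hle_M _ hz _ hq
      rw [map_add, map_smul, map_smul, smul_eq_mul, smul_eq_mul, ← hMp₁, ← hMp₂] at this
      have hrM : r ≤ M' x := hr.2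
      have hrM' : r' ≤ M' y := hr'.2
      nlinarith [this]
  obtain ⟨a, hamem, haaff⟩ := h3 T hTval hTconv
  -- a is sandwiched
  have haT : ∀ z ∈ K, m' z ≤ a z ∧ a z ≤ M' z := by
    intro z hz
    have := hamem z hz
    rw [hTeq z hz] at this
    exact ⟨this.1, this.2⟩
  -- φ := hom a is additive on C
  have haff_le : ∀ x ∈ K, ∀ y ∈ K, ∀ θ : ℝ, 0 < θ → θ < 1 →
      a ((1 - θ) • x + θ • y) ≤ (1 - θ) * a x + θ * a y := by
    intro x hx y hy θ hθ hθ'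
    rw [haaff x hx y hy θ hθ hθ', smul_eq_mul, smul_eq_mul]
  have haff_ge : ∀ x ∈ K, ∀ y ∈ K, ∀ θ : ℝ, 0 < θ → θ < 1 →
      (fun z => -(a z)) ((1 - θ) • x + θ • y) ≤
        (1 - θ) * (fun z => -(a z)) x + θ * (fun z => -(a z)) y := by
    intro x hx y hy θ hθ hθ'
    have := haaff x hx y hy θ hθ hθ'
    rw [smul_eq_mul, smul_eq_mul] at this
    simp only
    linarith
  have hφadd : ∀ c ∈ C, ∀ c' ∈ C,
      Ch6X.hom a (c + c') = Ch6X.hom a c + Ch6X.hom a c' := by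
    intro c hc c' hc'
    refine le_antisymm (Ch6X.hom_subadd hKconv hC haff_le hc hc') ?_
    have h := Ch6X.hom_subadd hKconv hC (f := fun z => -(a z)) haff_ge hc hc'
    have he : ∀ p : ℝ × E, Ch6X.hom (fun z => -(a z)) p = -(Ch6X.hom a p) := by
      intro p; simp [Ch6X.hom]
    rw [he, he, he] at h
    linarith
  have hφ0 : ∀ c ∈ C, 0 ≤ Ch6X.hom a c := by
    intro c hc
    rcases eq_or_ne c 0 with rfl | hne
    · rw [Ch6X.hom_zero]
    · obtain ⟨h1, h2, -⟩ := Ch6.rep' hC hc hne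
      have h0 : 0 ≤ a (c.1⁻¹ • c.2) :=
        le_trans (le_max_left _ _) (haT _ h2).1
      exact mul_nonneg h1.le h0
  have hφf : ∀ c ∈ C, f c ≤ Ch6X.hom a c := by
    intro c hc
    rcases eq_or_ne c 0 with rfl | hne
    · rw [Ch6X.hom_zero, map_zero]
    · obtain ⟨h1, h2, h3'⟩ := Ch6.rep' hC hc hne
      have hfa : f ((1 : ℝ), c.1⁻¹ • c.2) ≤ a (c.1⁻¹ • c.2) :=
        le_trans (le_max_right _ _) (haT _ h2).1
      calc f c = c.1 * f ((1 : ℝ), c.1⁻¹ • c.2) := by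
            conv_lhs => rw [h3']
            rw [map_smul, smul_eq_mul]
        _ ≤ c.1 * a (c.1⁻¹ • c.2) := mul_le_mul_of_nonneg_left hfa h1.le
        _ = Ch6X.hom a c := rfl
  -- hom a c is at most the sup of f on [0,c]
  have hφQ : ∀ c ∈ C, c ≠ 0 → ∀ Q : Set (ℝ × E),
      (∀ p ∈ C, c - p ∈ C → p ∈ Q) → BddAbove (f '' Q) →
      Ch6X.hom a c ≤ sSup (f '' Q) := by
    intro c hc hne Q hQ hQbdd
    obtain ⟨h1, h2, h3'⟩ := Ch6.rep' hC hc hne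
    obtain ⟨p, hp, hMp, -⟩ := hmax _ h2
    have hsc : c.1 • p ∈ Q := by
      apply hQ
      · exact Ch6.smul_mem hC h1 hp.1
      · have heq : c - c.1 • p = c.1 • (((1 : ℝ), c.1⁻¹ • c.2) - p) := by
          rw [smul_sub, ← h3']
        rw [heq]
        exact Ch6.smul_mem hC h1 hp.2
    have : Ch6X.hom a c ≤ c.1 * M' (c.1⁻¹ • c.2) :=
      mul_le_mul_of_nonneg_left (haT _ h2).2 h1.le
    calc Ch6X.hom a c ≤ c.1 * M' (c.1⁻¹ • c.2) := this
      _ = f (c.1 • p) := by rw [hMp, map_smul, smul_eq_mul]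
      _ ≤ sSup (f '' Q) := le_csSup hQbdd (Set.mem_image_of_mem f hsc)
  -- final contradiction
  have huvC : u + v ∈ C := Ch6.add_mem hKconv hC hu hv
  set Auv : Set (ℝ × E) := {p : ℝ × E | p ∈ C ∧ (u + v) - p ∈ C} with hAuv
  have hwAuv : w ∈ Auv := ⟨hw, hr⟩
  have hAuvbdd : BddAbove (f '' Auv) :=
    ((Ch6.cpt_interval hKne hKcomp hC).image f.continuous).bddAbove
  have step1 : f w ≤ sSup (f '' Auv) := le_csSup hAuvbdd (Set.mem_image_of_mem f hwAuv)
  have step2 : sSup (f '' Auv) ≤ Ch6X.hom a (u + v) := by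
    apply csSup_le (Set.Nonempty.image f ⟨w, hwAuv⟩)
    rintro r ⟨p, hp, rfl⟩
    have hcompl : (u + v) - p ∈ C := hp.2
    have : Ch6X.hom a p + Ch6X.hom a ((u + v) - p) = Ch6X.hom a (u + v) := by
      rw [← hφadd p hp.1 _ hcompl, show p + (u + v - p) = u + v by abel]
    have h0 := hφ0 _ hcompl
    have hf' := hφf p hp.1
    linarith
  have step3 : Ch6X.hom a (u + v) = Ch6X.hom a u + Ch6X.hom a v := hφadd u hu v hv
  -- bound hom a u by sup over A, hom a v by sup over B
  have hAbdd : BddAbove (f '' A) := (hAcpt.image f.continuous).bddAbove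
  have hBbdd : BddAbove (f '' B) := (hBcpt.image f.continuous).bddAbove
  have step4 : Ch6X.hom a u ≤ sSup (f '' A) :=
    hφQ u hu hune A (fun p hp hup => ⟨hp, hup⟩) hAbdd
  have step5 : Ch6X.hom a v ≤ sSup (f '' B) :=
    hφQ v hv hvne B (fun p hp hvp => ⟨hp, hvp⟩) hBbdd
  -- sups over A and B are attained and their sum is < s
  have h0A : (0 : ℝ × E) ∈ A := ⟨Ch6.zero_mem hC, by simpa using hu⟩
  have h0B : (0 : ℝ × E) ∈ B := ⟨Ch6.zero_mem hC, by simpa using hv⟩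
  obtain ⟨p₁, hp₁, hp₁m⟩ := hAcpt.exists_isMaxOn ⟨0, h0A⟩ f.continuous.continuousOn
  obtain ⟨p₂, hp₂, hp₂m⟩ := hBcpt.exists_isMaxOn ⟨0, h0B⟩ f.continuous.continuousOn
  have hsupA : sSup (f '' A) ≤ f p₁ := by
    apply csSup_le (Set.Nonempty.image f ⟨0, h0A⟩)
    rintro r ⟨q, hq, rfl⟩
    exact hp₁m hq
  have hsupB : sSup (f '' B) ≤ f p₂ := by
    apply csSup_le (Set.Nonempty.image f ⟨0, h0B⟩)
    rintro r ⟨q, hq, rfl⟩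
    exact hp₂m hq
  have hlast : f p₁ + f p₂ < s := by
    have : p₁ + p₂ ∈ A + B := Set.add_mem_add hp₁ hp₂
    have := hfs _ this
    rwa [map_add] at this
  linarith

end Topo
end Ch6Y


/-- Characterization of Choquet simplexes: for a nonempty compact convex set
`K` in a Hausdorff locally convex real TVS, with
`C = {(λ, λ • x) : λ > 0, x ∈ K} ∪ {0}` ordered by `u ≤ v ↔ v - u ∈ C`,
the following are equivalent: `C` is a lattice; `C` has the Riesz decomposition
property; every convex set-valued map on `K` with nonempty compact convex
values in `ℝ` admits an affine selection. -/
theorem stmt6 {E : Type*} [AddCommGroup E] [Module ℝ E] [TopologicalSpace E]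
    [IsTopologicalAddGroup E] [ContinuousSMul ℝ E] [T2Space E]
    [LocallyConvexSpace ℝ E]
    (K : Set E) (hKne : K.Nonempty) (hKcomp : IsCompact K) (hKconv : Convex ℝ K)
    (C : Set (ℝ × E))
    (hC : C = {p : ℝ × E | ∃ l : ℝ, 0 < l ∧ ∃ x ∈ K, p = (l, l • x)} ∪ {0}) :
    ((∀ u ∈ C, ∀ v ∈ C,
        (∃ s ∈ C, (s - u ∈ C ∧ s - v ∈ C) ∧
          ∀ t ∈ C, t - u ∈ C → t - v ∈ C → t - s ∈ C) ∧
        (∃ i ∈ C, (u - i ∈ C ∧ v - i ∈ C) ∧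
          ∀ t ∈ C, u - t ∈ C → v - t ∈ C → i - t ∈ C)) ↔
      (∀ u ∈ C, ∀ v ∈ C, ∀ w ∈ C, u + v - w ∈ C →
        ∃ w₁ ∈ C, ∃ w₂ ∈ C, w = w₁ + w₂ ∧ u - w₁ ∈ C ∧ v - w₂ ∈ C)) ∧
    ((∀ u ∈ C, ∀ v ∈ C, ∀ w ∈ C, u + v - w ∈ C →
        ∃ w₁ ∈ C, ∃ w₂ ∈ C, w = w₁ + w₂ ∧ u - w₁ ∈ C ∧ v - w₂ ∈ C) ↔
      (∀ T : E → Set ℝ,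
        (∀ x ∈ K, (T x).Nonempty ∧ IsCompact (T x) ∧ Convex ℝ (T x)) →
        (∀ x ∈ K, ∀ y ∈ K, ∀ θ : ℝ, 0 < θ → θ < 1 →
          (1 - θ) • T x + θ • T y ⊆ T ((1 - θ) • x + θ • y)) →
        ∃ a : E → ℝ, (∀ x ∈ K, a x ∈ T x) ∧
          (∀ x ∈ K, ∀ y ∈ K, ∀ θ : ℝ, 0 < θ → θ < 1 →
            a ((1 - θ) • x + θ • y) = (1 - θ) • a x + θ • a y))) := by
  constructor
  · exact ⟨fun h1 => Ch6.one_two hKconv hC h1,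
      fun h2 => Ch6.two_one hKne hKcomp hKconv hC h2⟩
  · exact ⟨fun h2 => Ch6X.two_three hKconv hC h2,
      fun h3 => Ch6Y.three_two hKne hKcomp hKconv hC h3⟩
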